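/- Over F_2, for any finite dimensional F_2-vector space W, the homology of the symmetric algebra S*(W) with respect to the Milnor derivation Q_i is isomorphic, as a graded algebra, to the truncated symmetric algebra S*(W)/⟨x^{2^i} : x ∈ W⟩ placed in even degrees via the Frobenius: H(S*(W), Q_i)^{2d} ≅ S^d(W)/⟨x^{2^i}⟩ and H(S*(W), Q_i)^{odd} = 0. -/

import Mathlib

open MvPolynomial

/-- The Milnor derivation `Q_i` on the symmetric (polynomial) algebra over `𝔽₂`. -/
noncomputable def Qder (σ : Type) (i : ℕ) :
    Derivation (ZMod 2) (MvPolynomial σ (ZMod 2)) (MvPolynomial σ (ZMod 2)) :=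
  MvPolynomial.mkDerivation (ZMod 2) (fun s => X s ^ 2 ^ (i + 1))

namespace Stmt9Aux

variable {σ : Type} [LinearOrder σ] (i : ℕ)
set_option linter.unusedSectionVars false

lemma two_pow_pos : 0 < 2 ^ (i + 1) := Nat.pow_pos (by norm_num)

lemma two_pow_succ : 2 ^ (i + 1) = 2 * 2 ^ i := by rw [pow_succ, mul_comm]

/-- "bad" indices of an exponent vector -/
noncomputable def Bset (e : σ →₀ ℕ) : Finset σ :=
  e.support.filter fun s => Odd (e s) ∨ 2 ^ (i + 1) ≤ e s

lemma mem_Bset {e : σ →₀ ℕ} {s : σ} :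
    s ∈ Bset i e ↔ (Odd (e s) ∨ 2 ^ (i + 1) ≤ e s) := by
  have h2 := two_pow_pos i
  simp only [Bset, Finset.mem_filter, Finsupp.mem_support_iff]
  constructor
  · rintro ⟨-, h⟩; exact h
  · intro h
    refine ⟨?_, h⟩
    rcases h with h | h
    · rw [Nat.odd_iff] at h; omega
    · omega

/-- odd indices of an exponent vector -/
noncomputable def Todd (e : σ →₀ ℕ) : Finset σ :=
  e.support.filter fun s => Odd (e s)

lemma mem_Todd {e : σ →₀ ℕ} {s : σ} : s ∈ Todd e ↔ Odd (e s) := by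
  simp only [Todd, Finset.mem_filter, Finsupp.mem_support_iff]
  constructor
  · rintro ⟨-, h⟩; exact h
  · intro h; rw [Nat.odd_iff] at h; exact ⟨by omega, by rwa [Nat.odd_iff]⟩

lemma Todd_subset_Bset (e : σ →₀ ℕ) : Todd e ⊆ Bset i e := fun s hs =>
  (mem_Bset i).mpr (Or.inl (mem_Todd.mp hs))

/-- exponent vector of the `s`-th term of `Q` applied to the monomial `e` -/
noncomputable def tgt (e : σ →₀ ℕ) (s : σ) : σ →₀ ℕ := e + Finsupp.single s (2 ^ (i + 1) - 1)

lemma tgt_apply_self (e : σ →₀ ℕ) (s : σ) : tgt i e s s = e s + (2 ^ (i + 1) - 1) := by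
  simp [tgt]

lemma tgt_apply_ne (e : σ →₀ ℕ) {s t : σ} (h : t ≠ s) : tgt i e s t = e t := by
  simp [tgt, Finsupp.single_apply, Ne.symm h]

/-- the formula for `Q` on a monomial -/
lemma Qmon (e : σ →₀ ℕ) :
    Qder σ i (monomial e 1) = ∑ s ∈ Todd e, monomial (tgt i e s) 1 := by
  have h2 := two_pow_pos i
  rw [Qder, mkDerivation_monomial, one_smul, Finsupp.sum, Todd, Finset.sum_filter]
  refine Finset.sum_congr rfl fun s hs => ?_
  have hs' : e s ≠ 0 := Finsupp.mem_support_iff.mp hs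
  by_cases ho : Odd (e s)
  · rw [if_pos ho]
    have hc : ((e s : ℕ) : ZMod 2) = 1 := by
      rw [← ZMod.natCast_mod, Nat.odd_iff.mp ho, Nat.cast_one]
    rw [hc, X_pow_eq_monomial, smul_eq_mul, monomial_mul, one_mul]
    refine congrArg (fun v => monomial v (1 : ZMod 2)) ?_
    ext t
    rcases eq_or_ne t s with rfl | ht
    · simp only [Finsupp.add_apply, Finsupp.tsub_apply, Finsupp.single_eq_same,
        tgt_apply_self]
      omega
    · simp only [Finsupp.add_apply, Finsupp.tsub_apply, Finsupp.single_apply,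
        if_neg (Ne.symm ht), tgt_apply_ne i e ht]
      omega
  · rw [if_neg ho]
    have hc : ((e s : ℕ) : ZMod 2) = 0 := by
      rw [← ZMod.natCast_mod]
      have h0 : e s % 2 = 0 := by rw [Nat.odd_iff] at ho; omega
      rw [h0, Nat.cast_zero]
    rw [hc, monomial_zero, zero_smul]


/-- `Bset` is unchanged by adding `2^(i+1)-1` at an odd position -/
lemma Bset_tgt {e : σ →₀ ℕ} {s : σ} (hs : Odd (e s)) : Bset i (tgt i e s) = Bset i e := by
  have h2 := two_pow_pos i
  ext t
  rw [mem_Bset, mem_Bset]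
  rcases eq_or_ne t s with rfl | ht
  · rw [tgt_apply_self]
    rw [Nat.odd_iff] at hs ⊢
    constructor
    · intro _; exact Or.inl (by rwa [Nat.odd_iff])
    · intro _; exact Or.inr (by omega)
  · rw [tgt_apply_ne i e ht]

/-- the homotopy on a monomial exponent -/
noncomputable def Hmon (e : σ →₀ ℕ) : MvPolynomial σ (ZMod 2) :=
  if h : (Bset i e).Nonempty then
    if Odd (e ((Bset i e).min' h)) then 0
    else monomial (e - Finsupp.single ((Bset i e).min' h) (2 ^ (i + 1) - 1)) 1
  else 0

/-- the projection onto "harmonic" monomials -/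
noncomputable def pimon (e : σ →₀ ℕ) : MvPolynomial σ (ZMod 2) :=
  if (Bset i e).Nonempty then 0 else monomial e 1

/-- constructing a linear endomorphism of the polynomial ring from values on monomials -/
noncomputable def mk (g : (σ →₀ ℕ) → MvPolynomial σ (ZMod 2)) :
    MvPolynomial σ (ZMod 2) →ₗ[ZMod 2] MvPolynomial σ (ZMod 2) :=
  (basisMonomials σ (ZMod 2)).constr (ZMod 2) g

lemma mk_monomial (g : (σ →₀ ℕ) → MvPolynomial σ (ZMod 2)) (e : σ →₀ ℕ) (r : ZMod 2) :
    mk g (monomial e r) = r • g e := by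
  have hb : (basisMonomials σ (ZMod 2)) e = monomial e 1 :=
    congrFun (coe_basisMonomials σ (ZMod 2)) e
  have h1 : monomial e r = r • (basisMonomials σ (ZMod 2)) e := by
    rw [hb, smul_monomial, smul_eq_mul, mul_one]
  rw [h1, map_smul, mk, Module.Basis.constr_basis]

/-- The key identity, on monomials: `Q H + H Q + π = id`. -/
lemma key_mon (e : σ →₀ ℕ) :
    Qder σ i (Hmon i e) + mk (Hmon i) (Qder σ i (monomial e 1)) + pimon i e = monomial e 1 := by
  classical
  have h2 := two_pow_pos i
  by_cases h : (Bset i e).Nonempty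
  · set j := (Bset i e).min' h with hjdef
    have hjB : j ∈ Bset i e := Finset.min'_mem _ h
    have hQsum : mk (Hmon i) (Qder σ i (monomial e 1)) =
        ∑ s ∈ Todd e, Hmon i (tgt i e s) := by
      rw [Qmon, map_sum]
      refine Finset.sum_congr rfl fun s _ => ?_
      rw [mk_monomial, one_smul]
    have hmin : ∀ s ∈ Todd e, ∀ (h' : (Bset i (tgt i e s)).Nonempty),
        (Bset i (tgt i e s)).min' h' = j := by
      intro s hs h'
      have hB := Bset_tgt i (mem_Todd.mp hs)
      rw [hjdef]
      congr 1
    rw [pimon, if_pos h]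
    by_cases hoj : Odd (e j)
    · -- minimal bad index is odd: H e = 0 and H (Q e) = e
      have hH0 : Hmon i e = 0 := by rw [Hmon, dif_pos h, if_pos hoj]
      rw [hH0, map_zero, zero_add, add_zero, hQsum]
      rw [Finset.sum_eq_single j]
      · have hne : (Bset i (tgt i e j)).Nonempty := by
          rw [Bset_tgt i hoj]; exact h
        rw [Hmon, dif_pos hne, hmin j (mem_Todd.mpr hoj) hne]
        have hev : ¬ Odd (tgt i e j j) := by
          rw [tgt_apply_self]
          simp only [Nat.odd_iff] at hoj ⊢
          omega
        rw [if_neg hev, tgt, add_tsub_cancel_right]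
      · intro s hs hne
        have hneB : (Bset i (tgt i e s)).Nonempty := by
          rw [Bset_tgt i (mem_Todd.mp hs)]; exact h
        rw [Hmon, dif_pos hneB, hmin s hs hneB]
        have hoj' : Odd (tgt i e s j) := by rwa [tgt_apply_ne i e (Ne.symm hne)]
        rw [if_pos hoj']
      · intro hj'; exact absurd (mem_Todd.mpr hoj) hj'
    · -- minimal bad index is even, hence has large exponent
      have hle : 2 ^ (i + 1) ≤ e j := ((mem_Bset i).mp hjB).resolve_left hoj
      have hsle : Finsupp.single j (2 ^ (i + 1) - 1) ≤ e :=
        Finsupp.single_le_iff.mpr (by omega)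
      set e'' := e - Finsupp.single j (2 ^ (i + 1) - 1) with he''
      have h1 : e'' + Finsupp.single j (2 ^ (i + 1) - 1) = e := tsub_add_cancel_of_le hsle
      have he''j : e'' j = e j - (2 ^ (i + 1) - 1) := by
        rw [he'', Finsupp.tsub_apply, Finsupp.single_eq_same]
      have he''t : ∀ t, t ≠ j → e'' t = e t := by
        intro t ht
        rw [he'', Finsupp.tsub_apply, Finsupp.single_apply, if_neg (Ne.symm ht), Nat.sub_zero]
      have hoj'' : Odd (e'' j) := by
        simp only [Nat.odd_iff] at hoj ⊢
        rw [he''j]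
        omega
      have hH : Hmon i e = monomial e'' 1 := by rw [Hmon, dif_pos h, if_neg hoj]
      have hTe'' : Todd e'' = insert j (Todd e) := by
        ext t
        rw [mem_Todd, Finset.mem_insert, mem_Todd]
        rcases eq_or_ne t j with rfl | ht
        · simp [hoj'']
        · rw [he''t t ht]; simp [ht]
      have hjT : j ∉ Todd e := fun hc => hoj (mem_Todd.mp hc)
      have htgt : tgt i e'' j = e := by rw [tgt, h1]
      -- compute Q (H e)
      rw [hH, Qmon, hTe'', Finset.sum_insert hjT, htgt, hQsum]
      -- remaining sums cancel termwise
      have hterm : ∀ s ∈ Todd e, Hmon i (tgt i e s) = monomial (tgt i e'' s) 1 := by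
        intro s hs
        have hos : Odd (e s) := mem_Todd.mp hs
        have hsj : s ≠ j := fun hc => hoj (hc ▸ hos)
        have hneB : (Bset i (tgt i e s)).Nonempty := by
          rw [Bset_tgt i hos]; exact h
        rw [Hmon, dif_pos hneB, hmin s hs hneB]
        have hoj' : ¬ Odd (tgt i e s j) := by
          rw [tgt_apply_ne i e (Ne.symm hsj)]; exact hoj
        rw [if_neg hoj']
        refine congrArg (fun v => monomial v (1 : ZMod 2)) ?_
        ext t
        rcases eq_or_ne t s with rfl | hts
        · rw [Finsupp.tsub_apply, tgt_apply_self, tgt_apply_self,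
            Finsupp.single_apply, if_neg (fun hc : j = t => hsj hc.symm), Nat.sub_zero,
            he''t t hsj]
        · rcases eq_or_ne t j with rfl | htj
          · rw [Finsupp.tsub_apply, tgt_apply_ne i e hts, tgt_apply_ne i e'' hts,
              Finsupp.single_eq_same, he''j]
          · rw [Finsupp.tsub_apply, tgt_apply_ne i e hts, tgt_apply_ne i e'' hts,
              Finsupp.single_apply, if_neg (fun hc : j = t => htj hc.symm), Nat.sub_zero,
              he''t t htj]
      rw [Finset.sum_congr rfl hterm, add_zero, add_assoc, CharTwo.add_self_eq_zero, add_zero]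
  · -- no bad indices: π e = e and everything else vanishes
    have hT : Todd e = ∅ := Finset.subset_empty.mp
      (Finset.not_nonempty_iff_eq_empty.mp h ▸ Todd_subset_Bset i e)
    have hH0 : Hmon i e = 0 := by rw [Hmon, dif_neg h]
    rw [hH0, map_zero, zero_add, Qmon, hT, Finset.sum_empty, map_zero, zero_add,
      pimon, if_neg h]


noncomputable def Hlin : MvPolynomial σ (ZMod 2) →ₗ[ZMod 2] MvPolynomial σ (ZMod 2) :=
  mk (Hmon i)

noncomputable def pilin : MvPolynomial σ (ZMod 2) →ₗ[ZMod 2] MvPolynomial σ (ZMod 2) :=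
  mk (pimon i)

/-- The key identity `Q ∘ H + H ∘ Q + π = id`. -/
lemma key (p : MvPolynomial σ (ZMod 2)) :
    Qder σ i (Hlin i p) + Hlin i (Qder σ i p) + pilin i p = p := by
  have hmaps : ((Qder σ i).toLinearMap ∘ₗ Hlin i) + ((Hlin i) ∘ₗ (Qder σ i).toLinearMap)
      + pilin i = LinearMap.id := by
    apply (basisMonomials σ (ZMod 2)).ext
    intro e
    have hb : (basisMonomials σ (ZMod 2)) e = monomial e 1 :=
      congrFun (coe_basisMonomials σ (ZMod 2)) e
    simp only [LinearMap.add_apply, LinearMap.coe_comp, Function.comp_apply,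
      LinearMap.id_apply, hb]
    have hd : ∀ q, (Qder σ i).toLinearMap q = Qder σ i q := fun q => rfl
    rw [hd, hd]
    show Qder σ i (Hlin i (monomial e 1)) + Hlin i (Qder σ i (monomial e 1))
      + pilin i (monomial e 1) = monomial e 1
    rw [show Hlin i (monomial e 1) = Hmon i e by rw [Hlin, mk_monomial, one_smul],
      show pilin i (monomial e 1) = pimon i e by rw [pilin, mk_monomial, one_smul]]
    exact key_mon i e
  have := LinearMap.congr_fun hmaps p
  simpa using this


/-- π kills boundaries. -/
lemma piQ (p : MvPolynomial σ (ZMod 2)) : pilin i (Qder σ i p) = 0 := by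
  have hmaps : (pilin i) ∘ₗ (Qder σ i).toLinearMap = 0 := by
    apply (basisMonomials σ (ZMod 2)).ext
    intro e
    have hb : (basisMonomials σ (ZMod 2)) e = monomial e 1 :=
      congrFun (coe_basisMonomials σ (ZMod 2)) e
    simp only [LinearMap.coe_comp, Function.comp_apply, LinearMap.zero_apply, hb]
    have hd : ∀ q, (Qder σ i).toLinearMap q = Qder σ i q := fun q => rfl
    rw [hd, Qmon, map_sum]
    refine Finset.sum_eq_zero fun s hs => ?_
    have hne : (Bset i (tgt i e s)).Nonempty :=
      ⟨s, (Bset_tgt i (mem_Todd.mp hs)) ▸ Todd_subset_Bset i e hs⟩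
    rw [pilin, mk_monomial, one_smul, pimon, if_pos hne]
  exact LinearMap.congr_fun hmaps p

lemma zmod2_sq : ∀ r : ZMod 2, r ^ 2 = r := by decide

/-- halving an exponent vector -/
noncomputable def half (e : σ →₀ ℕ) : σ →₀ ℕ :=
  Finsupp.mapRange (· / 2) (by norm_num) e

noncomputable def rhomon (e : σ →₀ ℕ) : MvPolynomial σ (ZMod 2) :=
  if (Bset i e).Nonempty then 0 else monomial (half e) 1

noncomputable def rholin : MvPolynomial σ (ZMod 2) →ₗ[ZMod 2] MvPolynomial σ (ZMod 2) :=
  mk (rhomon i)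

/-- the image of π consists of squares -/
lemma pi_sqrt (p : MvPolynomial σ (ZMod 2)) : pilin i p = (rholin i p) ^ 2 := by
  induction p using MvPolynomial.induction_on' with
  | monomial e r =>
    rw [pilin, rholin, mk_monomial, mk_monomial, smul_pow, zmod2_sq, pimon, rhomon]
    by_cases h : (Bset i e).Nonempty
    · rw [if_pos h, if_pos h, smul_zero]
      rw [show (0 : MvPolynomial σ (ZMod 2)) ^ 2 = 0 by ring, smul_zero]
    · rw [if_neg h, if_neg h, monomial_pow, one_pow]
      have hev : ∀ s, ¬ Odd (e s) := by
        intro s hodd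
        exact h ⟨s, (mem_Bset i).mpr (Or.inl hodd)⟩
      have h2 : 2 • half e = e := by
        ext t
        have := hev t
        rw [Nat.odd_iff] at this
        simp only [Finsupp.smul_apply, half, Finsupp.mapRange_apply, smul_eq_mul]
        omega
      rw [h2]
  | add p q hp hq =>
    rw [map_add, map_add, hp, hq, ← CharTwo.add_sq]


open Classical in
/-- reduction: keep only monomials with all exponents `< 2^i` -/
noncomputable def redmon (e : σ →₀ ℕ) : MvPolynomial σ (ZMod 2) :=
  if (∀ s, e s < 2 ^ i) then monomial e 1 else 0

noncomputable def redlin : MvPolynomial σ (ZMod 2) →ₗ[ZMod 2] MvPolynomial σ (ZMod 2) :=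
  mk (redmon i)

lemma Bset_two_smul (e : σ →₀ ℕ) :
    (Bset i (2 • e)).Nonempty ↔ ¬ (∀ s, e s < 2 ^ i) := by
  have h2 : (2:ℕ) ^ (i + 1) = 2 * 2 ^ i := two_pow_succ i
  constructor
  · rintro ⟨s, hs⟩ hall
    rcases (mem_Bset i).mp hs with h | h
    · simp only [Finsupp.smul_apply, smul_eq_mul] at h
      rw [Nat.odd_iff] at h; omega
    · simp only [Finsupp.smul_apply, smul_eq_mul] at h
      have := hall s
      omega
  · intro h
    push_neg at h
    obtain ⟨s, hs⟩ := h
    exact ⟨s, (mem_Bset i).mpr (Or.inr (by simp only [Finsupp.smul_apply, smul_eq_mul]; omega))⟩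

/-- π of a square is the square of the reduction. -/
lemma pi_sq (q : MvPolynomial σ (ZMod 2)) : pilin i (q ^ 2) = (redlin i q) ^ 2 := by
  induction q using MvPolynomial.induction_on' with
  | monomial e r =>
    rw [monomial_pow, pilin, redlin, mk_monomial, mk_monomial, smul_pow, pimon, redmon]
    by_cases h : ∀ s, e s < 2 ^ i
    · rw [if_neg (by rw [Bset_two_smul]; exact fun hc => hc h), if_pos h, monomial_pow, one_pow]
    · rw [if_pos ((Bset_two_smul i e).mpr h), if_neg h, smul_zero,
        show (0 : MvPolynomial σ (ZMod 2)) ^ 2 = 0 by ring, smul_zero]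
  | add p q hp hq =>
    rw [CharTwo.add_sq, map_add, hp, hq, map_add, CharTwo.add_sq]

/-- everything is its reduction modulo the ideal of `2^i`-th powers of linear forms -/
lemma red_mem (q : MvPolynomial σ (ZMod 2)) :
    q + redlin i q ∈ Ideal.span {g : MvPolynomial σ (ZMod 2) |
      ∃ f : MvPolynomial σ (ZMod 2), f.IsHomogeneous 1 ∧ g = f ^ 2 ^ i} := by
  induction q using MvPolynomial.induction_on' with
  | monomial e r =>
    rw [redlin, mk_monomial, redmon]
    by_cases h : ∀ s, e s < 2 ^ i
    · rw [if_pos h, smul_monomial, smul_eq_mul, mul_one, CharTwo.add_self_eq_zero]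
      exact Submodule.zero_mem _
    · rw [if_neg h, smul_zero, add_zero]
      push_neg at h
      obtain ⟨s, hs⟩ := h
      have hXs : (X s : MvPolynomial σ (ZMod 2)) ^ 2 ^ i ∈ Ideal.span {g : MvPolynomial σ (ZMod 2) |
          ∃ f : MvPolynomial σ (ZMod 2), f.IsHomogeneous 1 ∧ g = f ^ 2 ^ i} :=
        Ideal.subset_span ⟨X s, isHomogeneous_X _ _, rfl⟩
      have heq : monomial e r = monomial (e - Finsupp.single s (2 ^ i)) r * (X s) ^ 2 ^ i := by
        rw [X_pow_eq_monomial, monomial_mul, mul_one,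
          tsub_add_cancel_of_le (Finsupp.single_le_iff.mpr hs)]
      rw [heq]
      exact Ideal.mul_mem_left _ _ hXs
  | add p q hp hq =>
    have : (p + q) + redlin i (p + q) = (p + redlin i p) + (q + redlin i q) := by
      rw [map_add]; ring
    rw [this]
    exact Submodule.add_mem _ hp hq

/-- Q of a homogeneous linear form is its `2^(i+1)`-th power. -/
lemma Qlin1 {f : MvPolynomial σ (ZMod 2)} (hf : f.IsHomogeneous 1) :
    Qder σ i f = f ^ 2 ^ (i + 1) := by
  have hfrob : ∀ (g h : MvPolynomial σ (ZMod 2)),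
      (g + h) ^ 2 ^ (i + 1) = g ^ 2 ^ (i + 1) + h ^ 2 ^ (i + 1) := by
    intro g h
    exact add_pow_char_pow g h 2 (i + 1)
  have hrep : ∀ e ∈ f.support, ∃ s : σ, e = Finsupp.single s 1 := by
    intro e he
    have hco : coeff e f ≠ 0 := mem_support_iff.mp he
    have h : e.sum (fun _ c => c) = 1 := by
      have h := hf hco
      rw [Finsupp.weight_apply] at h
      simpa [Finsupp.sum] using h
    have hne : e.support.Nonempty := by
      rcases Finset.eq_empty_or_nonempty e.support with h0 | h0
      · rw [Finsupp.support_eq_empty] at h0; subst h0; simp [Finsupp.sum] at h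
      · exact h0
    obtain ⟨s, hs⟩ := hne
    refine ⟨s, ?_⟩
    have hsum : e s + ∑ t ∈ e.support.erase s, e t = 1 := by
      rw [Finset.add_sum_erase _ _ hs]; exact h
    have hs1 : e s ≠ 0 := Finsupp.mem_support_iff.mp hs
    have hrest : ∑ t ∈ e.support.erase s, e t = 0 := by omega
    ext t
    rcases eq_or_ne t s with rfl | ht
    · rw [Finsupp.single_eq_same]; omega
    · rw [Finsupp.single_apply, if_neg (Ne.symm ht)]
      by_contra h0
      have htm : t ∈ e.support.erase s :=
        Finset.mem_erase.mpr ⟨ht, Finsupp.mem_support_iff.mpr h0⟩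
      exact h0 (Finset.sum_eq_zero_iff.mp hrest t htm)
  have hfr : (∑ v ∈ f.support, monomial v (coeff v f)) ^ 2 ^ (i + 1)
      = ∑ v ∈ f.support, (monomial v (coeff v f)) ^ 2 ^ (i + 1) := by
    rw [← iterateFrobenius_def (R := MvPolynomial σ (ZMod 2)) (p := 2) (n := i + 1), map_sum]
    refine Finset.sum_congr rfl fun v _ => ?_
    rw [iterateFrobenius_def]
  conv_lhs => rw [as_sum f]
  conv_rhs => rw [as_sum f, hfr]
  rw [map_sum]
  refine Finset.sum_congr rfl fun v hv => ?_
  obtain ⟨s, rfl⟩ := hrep v hv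
  set c := coeff (Finsupp.single s 1) f with hc
  have hmono : monomial (Finsupp.single s 1) c = c • X s := by
    rw [X, smul_monomial, smul_eq_mul, mul_one]
  rw [hmono, Derivation.map_smul, Qder, mkDerivation_X, smul_pow]
  have hcpow : c ^ 2 ^ (i + 1) = c := by
    have := FiniteField.pow_card_pow (K := ZMod 2) (i + 1) c
    rwa [ZMod.card] at this
  rw [hcpow]

end Stmt9Aux

open Stmt9Aux in
/-- Over `𝔽₂`, for a finite dimensional vector space `W`, the homology of `S^*(W)` with respect
to the Milnor derivation `Q_i` is the truncated symmetric algebra `S^*(W)/⟨x^(2^i) : x ∈ W⟩`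
placed in even degrees via the Frobenius `z ↦ z²`: squares are cycles, homogeneous cycles of
odd degree are boundaries, every cycle is a square modulo boundaries, and `q²` is a boundary
precisely when `q` lies in the ideal generated by the `2^i`-th powers of linear forms. -/
theorem stmt9 (σ : Type) [Fintype σ] (i : ℕ) :
    (∀ p : MvPolynomial σ (ZMod 2), Qder σ i (p ^ 2) = 0) ∧
    (∀ (k : ℕ) (p : MvPolynomial σ (ZMod 2)), p.IsHomogeneous k → Odd k →
      Qder σ i p = 0 → ∃ q, p = Qder σ i q) ∧
    (∀ p : MvPolynomial σ (ZMod 2), Qder σ i p = 0 →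
      ∃ q r : MvPolynomial σ (ZMod 2), p = q ^ 2 + Qder σ i r) ∧
    (∀ q : MvPolynomial σ (ZMod 2),
      (∃ r, q ^ 2 = Qder σ i r) ↔
        q ∈ Ideal.span {g : MvPolynomial σ (ZMod 2) |
          ∃ f : MvPolynomial σ (ZMod 2), f.IsHomogeneous 1 ∧ g = f ^ 2 ^ i}) := by
  letI : LinearOrder σ := LinearOrder.lift' (Fintype.equivFin σ) (Equiv.injective _)
  have hsq : ∀ p : MvPolynomial σ (ZMod 2), Qder σ i (p ^ 2) = 0 := fun p => by
    rw [pow_two, Derivation.leibniz, CharTwo.add_self_eq_zero]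
  refine ⟨hsq, ?_, ?_, ?_⟩
  · -- odd homogeneous cycles are boundaries
    intro k p hp hk hQ
    refine ⟨Hlin i p, ?_⟩
    have hkey := key i p
    rw [hQ, map_zero, add_zero] at hkey
    have hpi : pilin i p = 0 := by
      rw [as_sum p, map_sum]
      refine Finset.sum_eq_zero fun e he => ?_
      rw [pilin, mk_monomial]
      by_cases h : (Bset i e).Nonempty
      · rw [pimon, if_pos h, smul_zero]
      · exfalso
        have hev : ∀ s, e s % 2 = 0 := by
          intro s
          by_contra h0
          exact h ⟨s, (mem_Bset i).mpr (Or.inl (Nat.odd_iff.mpr (by omega)))⟩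
        have hco : coeff e p ≠ 0 := mem_support_iff.mp he
        have hdeg : e.sum (fun _ c => c) = k := by
          have h := hp hco
          rw [Finsupp.weight_apply] at h
          simpa [Finsupp.sum] using h
        rw [Nat.odd_iff, ← hdeg] at hk
        rw [Finsupp.sum, Finset.sum_nat_mod] at hk
        have : ∑ t ∈ e.support, e t % 2 = 0 := Finset.sum_eq_zero fun t _ => hev t
        omega
    rw [hpi, add_zero] at hkey
    exact hkey.symm
  · -- every cycle is a square modulo boundaries
    intro p hQ
    refine ⟨rholin i p, Hlin i p, ?_⟩
    have hkey := key i p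
    rw [hQ, map_zero, add_zero, pi_sqrt, add_comm] at hkey
    exact hkey.symm
  · intro q
    constructor
    · rintro ⟨r, hr⟩
      have h0 : pilin i (q ^ 2) = 0 := by rw [hr, piQ]
      rw [pi_sq] at h0
      have hred : redlin i q = 0 := pow_eq_zero_iff (two_ne_zero) |>.mp h0
      have hmem := red_mem i q
      rwa [hred, add_zero] at hmem
    · intro hq
      refine Submodule.span_induction ?_ ?_ ?_ ?_ hq
      · rintro g ⟨f, hf, rfl⟩
        refine ⟨f, ?_⟩
        rw [Qlin1 i hf, ← pow_mul, ← pow_succ]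
      · exact ⟨0, by simp⟩
      · rintro x y - - ⟨r1, h1⟩ ⟨r2, h2⟩
        exact ⟨r1 + r2, by rw [CharTwo.add_sq, h1, h2, map_add]⟩
      · rintro a x - ⟨r, hr⟩
        refine ⟨a ^ 2 * r, ?_⟩
        have h1 : (a • x) ^ 2 = a ^ 2 * Qder σ i r := by rw [smul_eq_mul, mul_pow, hr]
        have h2 : Qder σ i (a ^ 2 * r) = a ^ 2 * Qder σ i r := by
          rw [Derivation.leibniz, hsq a, smul_zero, add_zero, smul_eq_mul]
        rw [h1, h2]
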